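/- arXiv:2308.04569 — 4 statements merged into one kernel-verified Lean document; each statement's English description precedes it below -/
import Mathlib

section
/- Define π_0 = 1 and π_n = 1 - (1 - π_{n-1}/2)² for n ≥ 1 (i.e., the case N = M = 2 of the recursion π_n = 1 - (1 - π_{n-1}/N)^M). Then for all n ≥ 0, 1/(1+n) ≤ π_n ≤ 4/(4+n). -/
theorem pi_n_bounds (π : ℕ → ℝ) (h0 : π 0 = 1)
    (hrec : ∀ n, π (n + 1) = 1 - (1 - π n / 2) ^ 2) :
    ∀ n : ℕ, 1 / (1 + n : ℝ) ≤ π n ∧ π n ≤ 4 / (4 + n : ℝ) := by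
  intro n
  induction n with
  | zero => rw [h0]; norm_num
  | succ n ih =>
    obtain ⟨hl, hu⟩ := ih
    have hn : (0:ℝ) ≤ n := Nat.cast_nonneg n
    have h1 : (0:ℝ) < 1 + n := by linarith
    have h2 : (0:ℝ) < 4 + n := by linarith
    have h3 : (0:ℝ) < 2 + n := by linarith
    have h4 : (0:ℝ) < 5 + n := by linarith
    set x := π n with hx
    have ha : (1 + (n:ℝ)) * x ≥ 1 := by
      rw [ge_iff_le, ← div_le_iff₀' h1] at *; simpa [one_div] using hl
    have hb : (4 + (n:ℝ)) * x ≤ 4 := by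
      rw [← le_div_iff₀' h2]; simpa using hu
    have hx0 : 0 ≤ x := by nlinarith
    rw [hrec]
    push_cast
    constructor
    · rw [div_le_iff₀ (by linarith : (0:ℝ) < 1 + (n + 1))]
      nlinarith [mul_nonneg (by linarith : (0:ℝ) ≤ (1+(n:ℝ))*x - 1) (by linarith : (0:ℝ) ≤ 4 - (4+(n:ℝ))*x),
        mul_nonneg (by linarith : (0:ℝ) ≤ (1+(n:ℝ))*x - 1) hx0,
        sq_nonneg ((1+(n:ℝ))*x - 1), sq_nonneg x]
    · rw [le_div_iff₀ (by linarith : (0:ℝ) < 4 + (n + 1))]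
      nlinarith [sq_nonneg (4 - (4+(n:ℝ))*x), mul_nonneg (by linarith : (0:ℝ) ≤ 4 - (4+(n:ℝ))*x) hx0,
        sq_nonneg x, mul_nonneg hn hx0]
end

section
/- Let N ≥ 2, M ≥ 2 and let (p_1,...,p_N) be a probability vector with all p_i > 0 satisfying ∏ p_i^{-p_i} ≤ M ≤ (∏ p_i)^{-1/N}. Let λ ∈ [0,1] satisfy ∑_{i=1}^N p_i^λ log(M p_i) = 0, and set α_i = p_i^λ / ∑_{j=1}^N p_j^λ. Then (α_1,...,α_N) is a probability vector satisfying ∑_{i=1}^N α_i log p_i = -log M, and for any probability vector (β_1,...,β_N) with ∑_{i=1}^N β_i log p_i = -log M, one has -∑_{i=1}^N β_i log β_i ≤ -∑_{i=1}^N α_i log α_i = λ log M + log(∑_{i=1}^N p_i^λ). -/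
open Finset Real

lemma gibbs_term (a b : ℝ) (ha : 0 < a) (hb : 0 ≤ b) :
    b * Real.log a - b * Real.log b ≤ a - b := by
  rcases eq_or_lt_of_le hb with h | h
  · simp [← h]; positivity
  · have h1 : Real.log (a / b) ≤ a / b - 1 :=
      Real.log_le_sub_one_of_pos (by positivity)
    have h2 : Real.log (a / b) = Real.log a - Real.log b :=
      Real.log_div (ne_of_gt ha) (ne_of_gt h)
    calc b * Real.log a - b * Real.log b = b * (Real.log a - Real.log b) := by ring
    _ = b * Real.log (a / b) := by rw [h2]
    _ ≤ b * (a / b - 1) := by nlinarith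
    _ = a - b := by field_simp

theorem entropy_maximization
    (N M : ℕ) (hN : 2 ≤ N) (hM : 2 ≤ M) (p : Fin N → ℝ)
    (hpos : ∀ i, 0 < p i) (hsum : ∑ i, p i = 1)
    (h1 : ∏ i, (p i) ^ (-(p i)) ≤ (M : ℝ))
    (h2 : (M : ℝ) ≤ (∏ i, p i) ^ (-(1 / N : ℝ)))
    (l : ℝ) (hl : l ∈ Set.Icc (0 : ℝ) 1)
    (hroot : ∑ i, (p i) ^ l * Real.log (M * p i) = 0)
    (α : Fin N → ℝ) (hα : ∀ i, α i = (p i) ^ l / ∑ j, (p j) ^ l) :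
    (∀ i, 0 ≤ α i) ∧ (∑ i, α i = 1) ∧
    (∑ i, α i * Real.log (p i) = -Real.log M) ∧
    (∀ β : Fin N → ℝ, (∀ i, 0 ≤ β i) → (∑ i, β i = 1) →
      (∑ i, β i * Real.log (p i) = -Real.log M) →
      -∑ i, β i * Real.log (β i) ≤ -∑ i, α i * Real.log (α i)) ∧
    -∑ i, α i * Real.log (α i)
      = l * Real.log M + Real.log (∑ i, (p i) ^ l) := by
  have hMpos : (0 : ℝ) < M := by positivity
  set S := ∑ j, (p j) ^ l with hS
  have : Nonempty (Fin N) := ⟨⟨0, by omega⟩⟩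
  have hSpos : 0 < S := by
    apply Finset.sum_pos (fun i _ => Real.rpow_pos_of_pos (hpos i) l)
    exact Finset.univ_nonempty
  have hαpos : ∀ i, 0 < α i := fun i => by
    rw [hα i]; exact div_pos (Real.rpow_pos_of_pos (hpos i) l) hSpos
  have hαsum : ∑ i, α i = 1 := by
    simp only [hα]
    rw [← Finset.sum_div, div_self (ne_of_gt hSpos)]
  -- hroot rewritten
  have hroot' : ∑ i, (p i) ^ l * Real.log (p i) = -Real.log M * S := by
    have : ∑ i, (p i) ^ l * Real.log (M * p i)
        = ∑ i, ((p i) ^ l * Real.log M + (p i) ^ l * Real.log (p i)) := by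
      apply Finset.sum_congr rfl
      intro i _
      rw [Real.log_mul (ne_of_gt hMpos) (ne_of_gt (hpos i))]
      ring
    rw [this, Finset.sum_add_distrib, ← Finset.sum_mul] at hroot
    simp only [← hS] at hroot ⊢
    linarith [hroot]
  have hαlogp : ∑ i, α i * Real.log (p i) = -Real.log M := by
    simp only [hα, div_mul_eq_mul_div, ← Finset.sum_div, ← hS]
    rw [hroot']
    field_simp
  have hlogα : ∀ i, Real.log (α i) = l * Real.log (p i) - Real.log S := by
    intro i
    rw [hα i, Real.log_div (ne_of_gt (Real.rpow_pos_of_pos (hpos i) l)) (ne_of_gt hSpos),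
      Real.log_rpow (hpos i)]
  have hαent : ∑ i, α i * Real.log (α i) = -(l * Real.log M) - Real.log S := by
    calc ∑ i, α i * Real.log (α i)
        = ∑ i, (l * (α i * Real.log (p i)) - α i * Real.log S) := by
          apply Finset.sum_congr rfl; intro i _; rw [hlogα i]; ring
      _ = l * ∑ i, α i * Real.log (p i) - (∑ i, α i) * Real.log S := by
          rw [Finset.sum_sub_distrib, Finset.mul_sum, Finset.sum_mul]
      _ = -(l * Real.log M) - Real.log S := by rw [hαlogp, hαsum]; ring
  refine ⟨fun i => le_of_lt (hαpos i), hαsum, hαlogp, ?_, by rw [hαent]; ring⟩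
  intro β hβ0 hβsum hβlogp
  have hβlogα : ∑ i, β i * Real.log (α i) = -(l * Real.log M) - Real.log S := by
    calc ∑ i, β i * Real.log (α i)
        = ∑ i, (l * (β i * Real.log (p i)) - β i * Real.log S) := by
          apply Finset.sum_congr rfl; intro i _; rw [hlogα i]; ring
      _ = l * ∑ i, β i * Real.log (p i) - (∑ i, β i) * Real.log S := by
          rw [Finset.sum_sub_distrib, Finset.mul_sum, Finset.sum_mul]
      _ = -(l * Real.log M) - Real.log S := by rw [hβlogp, hβsum]; ring
  have key : ∑ i, β i * Real.log (α i) - ∑ i, β i * Real.log (β i) ≤ 0 := by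
    rw [← Finset.sum_sub_distrib]
    calc ∑ i, (β i * Real.log (α i) - β i * Real.log (β i))
        ≤ ∑ i, (α i - β i) := by
          apply Finset.sum_le_sum
          intro i _
          exact gibbs_term (α i) (β i) (hαpos i) (hβ0 i)
      _ = 0 := by rw [Finset.sum_sub_distrib, hαsum, hβsum]; ring
  rw [hαent]
  linarith [hβlogα ▸ key]
end

section
/- Fix integers m ≥ 3 and let L ≥ 1 be the unique integer with 2^{L+1} - 1 ≤ m ≤ 2^{L+2} - 2. Consider the directed graph G on vertex set ℤ/mℤ with edges from each vertex j to 2j+1 mod m and to 2j+2 mod m. Then: (a) every closed walk from vertex 0 back to vertex 0 that does not visit 0 in between has length at least L+1; and (b) for every integer l ≥ L+1 there exists a closed walk from 0 to 0 of length l that does not visit 0 in between. -/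
/-- Edge relation of the digraph on `ZMod m`: `j → 2j+1` and `j → 2j+2`. -/
def GStep (m : ℕ) (a b : ZMod m) : Prop := b = 2 * a + 1 ∨ b = 2 * a + 2

/-- key step lemma: from `q/2 - 1` there is an edge to `q - 1` (casts of naturals). -/
lemma cast_step (m q : ℕ) (hq : 2 ≤ q) :
    GStep m ((q / 2 - 1 : ℕ) : ZMod m) ((q - 1 : ℕ) : ZMod m) := by
  have hqe : 2 * (q / 2) + q % 2 = q := Nat.div_add_mod q 2
  have h1 : 1 ≤ q / 2 := by omega
  rcases Nat.mod_two_eq_zero_or_one q with h | h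
  · left
    have he : q - 1 = 2 * (q / 2 - 1) + 1 := by omega
    rw [he]; push_cast; ring
  · right
    have he : q - 1 = 2 * (q / 2 - 1) + 2 := by omega
    rw [he]; push_cast; ring

lemma cast_ne_zero' (m n : ℕ) (hm : 3 ≤ m) (h1 : 0 < n) (h2 : n < m) :
    ((n : ZMod m)) ≠ 0 := by
  haveI : NeZero m := ⟨by omega⟩
  intro h
  rw [ZMod.natCast_eq_zero_iff] at h
  exact absurd (Nat.le_of_dvd h1 h) (by omega)

lemma lift_walk (m l : ℕ) (w : ℕ → ZMod m) (h0 : w 0 = 0)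
    (hs : ∀ i < l, GStep m (w i) (w (i + 1))) :
    ∀ i ≤ l, ∃ n : ℕ, 2 ^ i ≤ n + 1 ∧ n + 2 ≤ 2 ^ (i + 1) ∧ (n : ZMod m) = w i := by
  intro i
  induction i with
  | zero => intro _; exact ⟨0, by norm_num, by norm_num, by simp [h0]⟩
  | succ i ih =>
    intro hi
    obtain ⟨n, hn1, hn2, hn3⟩ := ih (by omega)
    have hp1 : 2 ^ (i + 1) = 2 * 2 ^ i := by ring
    have hp2 : 2 ^ (i + 2) = 2 * 2 ^ (i + 1) := by ring
    rcases hs i (by omega) with h | h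
    · refine ⟨2 * n + 1, by omega, by omega, ?_⟩
      rw [h, ← hn3]; push_cast; ring
    · refine ⟨2 * n + 2, by omega, by omega, ?_⟩
      rw [h, ← hn3]; push_cast; ring

lemma cast_pred (m : ℕ) (hm : 1 ≤ m) : ((m - 1 : ℕ) : ZMod m) = -1 := by
  have h : ((m - 1 : ℕ) : ZMod m) + 1 = ((m - 1 + 1 : ℕ) : ZMod m) := by push_cast; ring
  have h2 : m - 1 + 1 = m := by omega
  rw [h2, ZMod.natCast_self] at h
  linear_combination h

/-- direct walk: binary expansion path from `0` to `N - 1` (mod m). -/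
def walkA (m N l : ℕ) : ℕ → ZMod m := fun i => ((N / 2 ^ (l - i) - 1 : ℕ) : ZMod m)

/-- walk to `m - 1`, then loop there, then jump to `0`. -/
def walkB (m l k : ℕ) : ℕ → ZMod m := fun i =>
  if i < l then (if i ≤ k then ((m / 2 ^ (k - i) - 1 : ℕ) : ZMod m)
    else ((m - 1 : ℕ) : ZMod m)) else 0

theorem closed_walks_at_zero
    (m L : ℕ) (hm : 3 ≤ m)
    (hL1 : 2 ^ (L + 1) - 1 ≤ m) (hL2 : m ≤ 2 ^ (L + 2) - 2) :
    (∀ (l : ℕ) (w : ℕ → ZMod m), 1 ≤ l →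
        w 0 = 0 → w l = 0 →
        (∀ i < l, GStep m (w i) (w (i + 1))) →
        (∀ i, 0 < i → i < l → w i ≠ 0) →
        L + 1 ≤ l) ∧
    ∀ l : ℕ, L + 1 ≤ l →
      ∃ w : ℕ → ZMod m,
        w 0 = 0 ∧ w l = 0 ∧
        (∀ i < l, GStep m (w i) (w (i + 1))) ∧
        (∀ i, 0 < i → i < l → w i ≠ 0) := by
  haveI : NeZero m := ⟨by omega⟩
  have hL1' : 2 ^ (L + 1) ≤ m + 1 := by
    have := Nat.one_le_two_pow (n := L + 1); omega
  have hL2' : m + 2 ≤ 2 ^ (L + 2) := by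
    have := Nat.one_le_two_pow (n := L + 2); omega
  constructor
  · -- lower bound
    intro l w hl h0 hl0 hs _
    obtain ⟨n, hn1, hn2, hn3⟩ := lift_walk m l w h0 hs l le_rfl
    have hdvd : m ∣ n := by
      rw [← ZMod.natCast_eq_zero_iff, hn3, hl0]
    have h2l : 2 ≤ 2 ^ l := by
      calc 2 = 2 ^ 1 := rfl
      _ ≤ 2 ^ l := Nat.pow_le_pow_right (by norm_num) hl
    have hn0 : 0 < n := by omega
    have hmn : m ≤ n := Nat.le_of_dvd hn0 hdvd
    have hlt : 2 ^ (L + 1) < 2 ^ (l + 1) := by omega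
    have := (Nat.pow_lt_pow_iff_right (a := 2) (by norm_num)).mp hlt
    omega
  · -- existence
    intro l hl
    rcases Nat.lt_or_ge l (L + 2) with hcase | hcase
    · -- l = L + 1 : direct closed walk via N = m + 1
      have hle : l = L + 1 := by omega
      have hN1 : 2 ^ l ≤ m + 1 := by rw [hle]; exact hL1'
      have hN2 : m + 1 < 2 ^ (l + 1) := by
        have h : (2 : ℕ) ^ (L + 2) ≤ 2 ^ (l + 1) :=
          Nat.pow_le_pow_right (by norm_num) (by omega)
        omega
      refine ⟨walkA m (m + 1) l, ?_, ?_, ?_, ?_⟩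
      · have hd : (m + 1) / 2 ^ l = 1 := by
          have hd1 : 1 ≤ (m + 1) / 2 ^ l :=
            (Nat.one_le_div_iff (Nat.pow_pos (n := l) (by norm_num))).mpr hN1
          have hd2 : (m + 1) / 2 ^ l < 2 := by
            rw [Nat.div_lt_iff_lt_mul (Nat.pow_pos (n := l) (by norm_num))]
            have h : 2 ^ l * 2 = 2 ^ (l + 1) := by ring
            omega
          omega
        simp [walkA, hd]
      · have h : l - l = 0 := by omega
        simp [walkA, h, ZMod.natCast_self]
      · intro i hi
        have hji : l - i = (l - i - 1) + 1 := by omega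
        have hji2 : l - (i + 1) = l - i - 1 := by omega
        have hq : 2 ≤ (m + 1) / 2 ^ (l - i - 1) := by
          rw [Nat.le_div_iff_mul_le (Nat.pow_pos (by norm_num))]
          calc 2 * 2 ^ (l - i - 1) = 2 ^ (l - i - 1 + 1) := by ring
          _ ≤ 2 ^ l := Nat.pow_le_pow_right (by norm_num) (by omega)
          _ ≤ m + 1 := hN1
        have hdd : (m + 1) / 2 ^ (l - i) = (m + 1) / 2 ^ (l - i - 1) / 2 := by
          conv_lhs => rw [hji, pow_succ, ← Nat.div_div_eq_div_mul]
        show GStep m (((m + 1) / 2 ^ (l - i) - 1 : ℕ) : ZMod m)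
          (((m + 1) / 2 ^ (l - (i + 1)) - 1 : ℕ) : ZMod m)
        rw [hdd, hji2]
        exact cast_step m ((m + 1) / 2 ^ (l - i - 1)) hq
      · intro i hi1 hi2
        have hq2 : 2 ≤ (m + 1) / 2 ^ (l - i) := by
          rw [Nat.le_div_iff_mul_le (Nat.pow_pos (by norm_num))]
          calc 2 * 2 ^ (l - i) = 2 ^ (l - i + 1) := by ring
          _ ≤ 2 ^ l := Nat.pow_le_pow_right (by norm_num) (by omega)
          _ ≤ m + 1 := hN1
        have hqm : (m + 1) / 2 ^ (l - i) ≤ m := by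
          have h2 : (m + 1) / 2 ^ (l - i) ≤ (m + 1) / 2 := by
            apply Nat.div_le_div_left _ (by norm_num)
            calc (2 : ℕ) = 2 ^ 1 := rfl
            _ ≤ 2 ^ (l - i) := Nat.pow_le_pow_right (by norm_num) (by omega)
          omega
        show (((m + 1) / 2 ^ (l - i) - 1 : ℕ) : ZMod m) ≠ 0
        exact cast_ne_zero' m _ hm (by omega) (by omega)
    · -- l ≥ L + 2 : walk to m - 1, loop there, then step to 0
      set k := Nat.log 2 m with hk
      have hk1 : 2 ^ k ≤ m := Nat.pow_log_le_self 2 (by omega)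
      have hk2 : m < 2 ^ (k + 1) := Nat.lt_pow_succ_log_self (by norm_num) m
      have hkL : k < L + 2 := by
        by_contra hc
        push_neg at hc
        have : 2 ^ (L + 2) ≤ 2 ^ k := Nat.pow_le_pow_right (by norm_num) hc
        omega
      have hkl : k < l := by omega
      have hm1 : ((m - 1 : ℕ) : ZMod m) = -1 := cast_pred m (by omega)
      refine ⟨walkB m l k, ?_, ?_, ?_, ?_⟩
      · have hd : m / 2 ^ k = 1 := by
          have hd1 : 1 ≤ m / 2 ^ k :=
            (Nat.one_le_div_iff (Nat.pow_pos (n := k) (by norm_num))).mpr hk1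
          have hd2 : m / 2 ^ k < 2 := by
            rw [Nat.div_lt_iff_lt_mul (Nat.pow_pos (n := k) (by norm_num))]
            have h : 2 ^ k * 2 = 2 ^ (k + 1) := by ring
            omega
          omega
        simp [walkB, hd, (by omega : 0 < l)]
      · simp [walkB]
      · intro i hi
        show GStep m (walkB m l k i) (walkB m l k (i + 1))
        rcases Nat.lt_or_ge i k with hik | hik
        · -- i + 1 ≤ k : division step
          have hi1l : i + 1 < l := by omega
          rw [walkB, walkB]
          simp only [if_pos hi, if_pos hi1l, if_pos (by omega : i ≤ k),
            if_pos (by omega : i + 1 ≤ k)]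
          have hji : k - i = (k - i - 1) + 1 := by omega
          have hji2 : k - (i + 1) = k - i - 1 := by omega
          have hq : 2 ≤ m / 2 ^ (k - i - 1) := by
            rw [Nat.le_div_iff_mul_le (Nat.pow_pos (by norm_num))]
            calc 2 * 2 ^ (k - i - 1) = 2 ^ (k - i - 1 + 1) := by ring
            _ ≤ 2 ^ k := Nat.pow_le_pow_right (by norm_num) (by omega)
            _ ≤ m := hk1
          have hdd : m / 2 ^ (k - i) = m / 2 ^ (k - i - 1) / 2 := by
            conv_lhs => rw [hji, pow_succ, ← Nat.div_div_eq_div_mul]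
          rw [hdd, hji2]
          exact cast_step m (m / 2 ^ (k - i - 1)) hq
        · -- i ≥ k : current vertex is m - 1
          have hwi : walkB m l k i = ((m - 1 : ℕ) : ZMod m) := by
            rcases Nat.eq_or_lt_of_le hik with he | hlt
            · rw [walkB]
              simp only [if_pos hi, if_pos (le_of_eq he.symm)]
              rw [← he]
              norm_num
            · rw [walkB]
              simp only [if_pos hi, if_neg (by omega : ¬ i ≤ k)]
          rw [hwi]
          rcases Nat.lt_or_ge (i + 1) l with h1l | h1l
          · -- self loop at m - 1
            rw [walkB]
            simp only [if_pos h1l, if_neg (by omega : ¬ i + 1 ≤ k)]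
            left
            rw [hm1]; ring
          · -- last step to 0
            rw [walkB]
            simp only [if_neg (by omega : ¬ i + 1 < l)]
            right
            rw [hm1]; ring
      · intro i hi1 hi2
        show walkB m l k i ≠ 0
        rw [walkB]
        simp only [if_pos hi2]
        rcases Nat.lt_or_ge k i with hik | hik
        · rw [if_neg (by omega : ¬ i ≤ k)]
          exact cast_ne_zero' m _ hm (by omega) (by omega)
        · rw [if_pos hik]
          have hq2 : 2 ≤ m / 2 ^ (k - i) := by
            rw [Nat.le_div_iff_mul_le (Nat.pow_pos (by norm_num))]
            calc 2 * 2 ^ (k - i) = 2 ^ (k - i + 1) := by ring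
            _ ≤ 2 ^ k := Nat.pow_le_pow_right (by norm_num) (by omega)
            _ ≤ m := hk1
          have hqm : m / 2 ^ (k - i) ≤ m := Nat.div_le_self _ _
          exact cast_ne_zero' m _ hm (by omega) (by omega)
end

section
/- Let m ≥ 3 and let L satisfy 2^{L+1} - 1 ≤ m ≤ 2^{L+2} - 2. In the directed graph G on ℤ/mℤ with edges j → 2j+1 mod m and j → 2j+2 mod m, for every k with 1 ≤ k ≤ L+1 and every vertex v with 2^k - 1 ≤ v ≤ min(2^{k+1} - 2, m - 1), there is a walk of length exactly k from vertex 0 to vertex v. -/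
lemma reach_aux (m : ℕ) :
    ∀ k, 1 ≤ k → ∀ v : ℕ, 2 ^ k - 1 ≤ v → v ≤ 2 ^ (k + 1) - 2 →
      ∃ w : ℕ → ZMod m,
        w 0 = 0 ∧ w k = (v : ZMod m) ∧
        ∀ i < k, GStep m (w i) (w (i + 1)) := by
  intro k
  induction k with
  | zero => omega
  | succ k ih =>
    intro _ v hv1 hv2
    rcases Nat.eq_zero_or_pos k with rfl | hk
    · -- base case: k+1 = 1, v ∈ {1,2}
      have hv : v = 1 ∨ v = 2 := by norm_num at hv1 hv2; omega
      refine ⟨fun i => if i = 0 then 0 else (v : ZMod m), rfl, by simp, ?_⟩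
      intro i hi
      interval_cases i
      simp only [if_pos rfl, if_neg one_ne_zero, GStep]
      rcases hv with rfl | rfl
      · left; push_cast; ring
      · right; push_cast; ring
    · -- inductive step
      have h1 : (1:ℕ) ≤ 2 ^ k := Nat.one_le_two_pow
      have e1 : (2:ℕ) ^ (k+1) = 2 * 2 ^ k := by ring
      have e2 : (2:ℕ) ^ (k+2) = 4 * 2 ^ k := by ring
      rw [e1] at hv1
      rw [show k + 1 + 1 = k + 2 from rfl, e2] at hv2
      -- find u with v = 2u+1 or v = 2u+2, u in previous band
      obtain ⟨u, hu, hub1, hub2⟩ :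
          ∃ u, (v = 2 * u + 1 ∨ v = 2 * u + 2) ∧ 2 ^ k - 1 ≤ u ∧ u ≤ 2 ^ (k+1) - 2 := by
        rcases Nat.even_or_odd v with ⟨u, hvu⟩ | ⟨u, hvu⟩
        · exact ⟨u - 1, by omega, by omega, by omega⟩
        · exact ⟨u, by omega, by omega, by omega⟩
      obtain ⟨w, hw0, hwk, hws⟩ := ih hk u hub1 hub2
      refine ⟨fun i => if i = k + 1 then (v : ZMod m) else w i, by simp [hw0], by simp, ?_⟩
      intro i hi
      rcases Nat.lt_or_ge i k with h | h
      · simp only [if_neg (by omega : i ≠ k + 1), if_neg (by omega : i + 1 ≠ k + 1)]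
        exact hws i h
      · have hik : i = k := by omega
        simp only [if_neg (by omega : i ≠ k + 1), if_pos (by omega : i + 1 = k + 1)]
        rw [show w i = (u : ZMod m) from hik ▸ hwk]
        rcases hu with rfl | rfl
        · left; push_cast; ring
        · right; push_cast; ring

theorem reach_level_band
    (m L : ℕ) (hm : 3 ≤ m)
    (hL1 : 2 ^ (L + 1) - 1 ≤ m) (hL2 : m ≤ 2 ^ (L + 2) - 2) :
    ∀ k, 1 ≤ k → k ≤ L + 1 →
      ∀ v : ℕ, 2 ^ k - 1 ≤ v → v ≤ min (2 ^ (k + 1) - 2) (m - 1) →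
        ∃ w : ℕ → ZMod m,
          w 0 = 0 ∧ w k = (v : ZMod m) ∧
          ∀ i < k, GStep m (w i) (w (i + 1)) := by
  intro k hk _ v hv1 hv2
  exact reach_aux m k hk v hv1 (le_trans hv2 (min_le_left _ _))
end
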